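/- Suppose w(y) ≤ C for all y ∈ Y, where C > 0, and let N = |Y|. Let ε ∈ (0, N] and δ ∈ (0,1). If the positive integer M satisfies M ≥ (2·C²·N²/ε²)·ln(2·(N+1)/δ), then with probability at least 1 − δ over the i.i.d. draw of y_1,…,y_M from q, one has Q̂_M(Y) > 0 and the self-normalized importance-sampled distribution π̂_M(y) = Q̂_M(y)/Q̂_M(Y) satisfies d_TV(π̂_M, π*) = (1/2)·∑_{y∈Y} |π̂_M(y) − π*(y)| ≤ ε. -/

import Mathlib

lemma hoeffding_scalar (p h : ℝ) (hp0 : 0 ≤ p) (hp1 : p ≤ 1) :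
    (1 - p) + p * Real.exp h ≤ Real.exp (p * h + h ^ 2 / 8) := by
  set u : ℝ → ℝ := fun x => 1 - p + p * Real.exp x with hu_def
  have hu_pos : ∀ x, 0 < u x := by
    intro x
    rcases eq_or_lt_of_le hp0 with h0 | h0
    · simp [hu_def, ← h0]
    · have h1 : 0 < p * Real.exp x := mul_pos h0 (Real.exp_pos x)
      have h1p : 0 ≤ 1 - p := by linarith
      simp only [hu_def]; linarith
  set φ : ℝ → ℝ := fun x => p * x + x ^ 2 / 8 - Real.log (u x) with hφ_def
  set ψ : ℝ → ℝ := fun x => p + x / 4 - p * Real.exp x / u x with hψ_def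
  have hu' : ∀ x, HasDerivAt u (p * Real.exp x) x := by
    intro x
    exact ((Real.hasDerivAt_exp x).const_mul p).const_add (1 - p)
  have hderφ : ∀ x, HasDerivAt φ (ψ x) x := by
    intro x
    have hlog : HasDerivAt (fun x => Real.log (u x)) (p * Real.exp x / u x) x :=
      (hu' x).log (ne_of_gt (hu_pos x))
    have h1 : HasDerivAt (fun x : ℝ => p * x + x ^ 2 / 8) (p + x / 4) x := by
      have := ((hasDerivAt_id x).const_mul p).add ((hasDerivAt_pow 2 x).div_const 8)
      exact this.congr_deriv (by push_cast; ring)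
    exact h1.sub hlog
  have hderψ : ∀ x, HasDerivAt ψ
      (1 / 4 - (p * Real.exp x * u x - p * Real.exp x * (p * Real.exp x)) / (u x) ^ 2) x := by
    intro x
    have hv : HasDerivAt (fun x => p * Real.exp x) (p * Real.exp x) x :=
      (Real.hasDerivAt_exp x).const_mul p
    have hdiv : HasDerivAt (fun x => p * Real.exp x / u x)
        ((p * Real.exp x * u x - p * Real.exp x * (p * Real.exp x)) / (u x) ^ 2) x :=
      hv.div (hu' x) (ne_of_gt (hu_pos x))
    have h1 : HasDerivAt (fun x : ℝ => p + x / 4) (1 / 4) x := by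
      simpa using ((hasDerivAt_id x).div_const 4).const_add p
    exact h1.sub hdiv
  have hρ : ∀ x, 0 ≤ 1 / 4 - (p * Real.exp x * u x - p * Real.exp x * (p * Real.exp x)) / (u x) ^ 2 := by
    intro x
    have ha0 : 0 ≤ p * Real.exp x := mul_nonneg hp0 (Real.exp_pos x).le
    have hab : p * Real.exp x ≤ u x := by
      simp only [hu_def]; nlinarith [Real.exp_pos x]
    have hb : 0 < u x := hu_pos x
    revert ha0 hab hb
    generalize u x = b
    generalize p * Real.exp x = a
    intro ha0 hab hb
    rw [sub_nonneg, div_le_iff₀ (by positivity)]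
    nlinarith [sq_nonneg (b - 2 * a)]
  have hψmono : Monotone ψ := by
    apply monotone_of_deriv_nonneg
    · exact fun x => (hderψ x).differentiableAt
    · intro x; rw [(hderψ x).deriv]; exact hρ x
  have hψ0 : ψ 0 = 0 := by
    simp [hψ_def, hu_def]
  have hφ0 : φ 0 = 0 := by
    simp [hφ_def, hu_def]
  have hφnonneg : 0 ≤ φ h := by
    rcases le_total 0 h with hh | hh
    · have hmono : MonotoneOn φ (Set.Ici 0) := by
        apply monotoneOn_of_deriv_nonneg (convex_Ici 0)
        · exact (Differentiable.continuous (fun x => (hderφ x).differentiableAt)).continuousOn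
        · exact fun x _ => (hderφ x).differentiableAt.differentiableWithinAt
        · intro x hx
          rw [(hderφ x).deriv]
          have : (0:ℝ) ≤ x := le_of_lt (by simpa using hx)
          calc (0:ℝ) = ψ 0 := hψ0.symm
          _ ≤ ψ x := hψmono this
      have := hmono (Set.self_mem_Ici) (Set.mem_Ici.mpr hh) hh
      linarith [hφ0]
    · have hmono : AntitoneOn φ (Set.Iic 0) := by
        apply antitoneOn_of_deriv_nonpos (convex_Iic 0)
        · exact (Differentiable.continuous (fun x => (hderφ x).differentiableAt)).continuousOn
        · exact fun x _ => (hderφ x).differentiableAt.differentiableWithinAt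
        · intro x hx
          rw [(hderφ x).deriv]
          have hx0 : x ≤ (0:ℝ) := le_of_lt (by simpa using hx)
          calc ψ x ≤ ψ 0 := hψmono hx0
          _ = 0 := hψ0
      have := hmono (Set.mem_Iic.mpr hh) (Set.self_mem_Iic) hh
      linarith [hφ0]
  have hlog : Real.log (u h) ≤ p * h + h ^ 2 / 8 := by
    simp only [hφ_def] at hφnonneg; linarith
  calc (1 - p) + p * Real.exp h = Real.exp (Real.log (u h)) := by
        rw [Real.exp_log (hu_pos h)]
  _ ≤ Real.exp (p * h + h ^ 2 / 8) := Real.exp_le_exp.mpr hlog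

lemma sum_prod_eq_pow {Y : Type*} [Fintype Y] [DecidableEq Y] (M : ℕ) (f : Y → ℝ) :
    ∑ s : Fin M → Y, ∏ j, f (s j) = (∑ y, f y) ^ M := by
  rw [← Fintype.piFinset_univ]
  rw [← Finset.prod_univ_sum]
  simp [Finset.prod_const]

lemma mgf_le {Y : Type*} [Fintype Y] (q g : Y → ℝ)
    (hq0 : ∀ y, 0 ≤ q y) (hq1 : ∑ y, q y = 1)
    (C : ℝ) (hC : 0 < C) (hg0 : ∀ y, 0 ≤ g y) (hgC : ∀ y, g y ≤ C) (lam : ℝ) :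
    ∑ y, q y * Real.exp (lam * g y) ≤
      Real.exp (lam * (∑ y, q y * g y) + lam ^ 2 * C ^ 2 / 8) := by
  set μ := ∑ y, q y * g y with hμ
  have hμ0 : 0 ≤ μ := Finset.sum_nonneg fun y _ => mul_nonneg (hq0 y) (hg0 y)
  have hμC : μ ≤ C := by
    calc μ ≤ ∑ y, q y * C := Finset.sum_le_sum fun y _ =>
            mul_le_mul_of_nonneg_left (hgC y) (hq0 y)
    _ = C := by rw [← Finset.sum_mul, hq1, one_mul]
  have chord : ∀ y, Real.exp (lam * g y) ≤
      (1 - g y / C) + g y / C * Real.exp (lam * C) := by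
    intro y
    have hθ0 : 0 ≤ g y / C := div_nonneg (hg0 y) hC.le
    have hθ1 : g y / C ≤ 1 := (div_le_one hC).mpr (hgC y)
    have hcvx := convexOn_exp.2 (Set.mem_univ (0:ℝ)) (Set.mem_univ (lam * C))
      (by linarith : (0:ℝ) ≤ 1 - g y / C) hθ0 (by ring)
    simp only [smul_eq_mul, mul_zero, zero_add, Real.exp_zero, mul_one] at hcvx
    have harg : g y / C * (lam * C) = lam * g y := by
      field_simp
    rw [harg] at hcvx
    linarith
  calc ∑ y, q y * Real.exp (lam * g y)
      ≤ ∑ y, q y * ((1 - g y / C) + g y / C * Real.exp (lam * C)) :=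
        Finset.sum_le_sum fun y _ => mul_le_mul_of_nonneg_left (chord y) (hq0 y)
  _ = (1 - μ / C) + μ / C * Real.exp (lam * C) := by
        have : ∀ y, q y * ((1 - g y / C) + g y / C * Real.exp (lam * C)) =
            q y + q y * g y * ((Real.exp (lam * C) - 1) / C) := by
          intro y; field_simp; ring
        simp only [this]
        rw [Finset.sum_add_distrib, ← Finset.sum_mul, hq1, ← hμ]
        field_simp
        ring
  _ ≤ Real.exp (μ / C * (lam * C) + (lam * C) ^ 2 / 8) :=
        hoeffding_scalar (μ / C) (lam * C) (div_nonneg hμ0 hC.le) ((div_le_one hC).mpr hμC)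
  _ = Real.exp (lam * μ + lam ^ 2 * C ^ 2 / 8) := by
        congr 1
        field_simp

lemma chernoff_one_sided {Y : Type*} [Fintype Y] [DecidableEq Y]
    (q : Y → ℝ) (hq0 : ∀ y, 0 ≤ q y) (hq1 : ∑ y, q y = 1)
    (g : Y → ℝ) (C : ℝ) (hC : 0 < C) (hg0 : ∀ y, 0 ≤ g y) (hgC : ∀ y, g y ≤ C)
    (M : ℕ) (t : ℝ) (ht : 0 ≤ t) (bad : (Fin M → Y) → Prop) [DecidablePred bad]
    (hbad : ∀ s, bad s → (M : ℝ) * ((∑ y, q y * g y) + t) ≤ ∑ j, g (s j)) :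
    ∑ s : Fin M → Y, (if bad s then ∏ j, q (s j) else 0) ≤
      Real.exp (-(2 * M * t ^ 2 / C ^ 2)) := by
  set μ := ∑ y, q y * g y with hμ
  set lam := 4 * t / C ^ 2 with hlam
  have hlam0 : 0 ≤ lam := by positivity
  have key : ∀ s : Fin M → Y, (if bad s then ∏ j, q (s j) else 0) ≤
      Real.exp (-(lam * (M * (μ + t)))) * ∏ j, (q (s j) * Real.exp (lam * g (s j))) := by
    intro s
    have hP0 : 0 ≤ ∏ j, q (s j) := Finset.prod_nonneg fun j _ => hq0 (s j)
    have hsplit : ∀ s : Fin M → Y,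
        Real.exp (-(lam * (M * (μ + t)))) * ∏ j, (q (s j) * Real.exp (lam * g (s j))) =
        (∏ j, q (s j)) * Real.exp (lam * ((∑ j, g (s j)) - M * (μ + t))) := by
      intro s
      rw [Finset.prod_mul_distrib, ← Real.exp_sum]
      rw [mul_sub, ← Finset.mul_sum, Real.exp_sub]
      rw [Real.exp_neg]
      field_simp [Real.exp_ne_zero]
    rw [hsplit]
    split_ifs with hb
    · have h1 : (0:ℝ) ≤ lam * ((∑ j, g (s j)) - M * (μ + t)) :=
        mul_nonneg hlam0 (by linarith [hbad s hb])
      nlinarith [Real.one_le_exp h1]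
    · positivity
  calc ∑ s : Fin M → Y, (if bad s then ∏ j, q (s j) else 0)
      ≤ ∑ s : Fin M → Y, Real.exp (-(lam * (M * (μ + t)))) *
          ∏ j, (q (s j) * Real.exp (lam * g (s j))) := Finset.sum_le_sum fun s _ => key s
  _ = Real.exp (-(lam * (M * (μ + t)))) * (∑ y, q y * Real.exp (lam * g y)) ^ M := by
        rw [← Finset.mul_sum, sum_prod_eq_pow M (fun y => q y * Real.exp (lam * g y))]
  _ ≤ Real.exp (-(lam * (M * (μ + t)))) * Real.exp (lam * μ + lam ^ 2 * C ^ 2 / 8) ^ M := by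
        apply mul_le_mul_of_nonneg_left _ (Real.exp_pos _).le
        apply pow_le_pow_left₀ (Finset.sum_nonneg fun y _ =>
          mul_nonneg (hq0 y) (Real.exp_pos _).le)
        exact mgf_le q g hq0 hq1 C hC hg0 hgC lam
  _ = Real.exp (-(lam * (M * (μ + t))) + M * (lam * μ + lam ^ 2 * C ^ 2 / 8)) := by
        rw [← Real.exp_nat_mul, ← Real.exp_add]
  _ = Real.exp (-(2 * M * t ^ 2 / C ^ 2)) := by
        congr 1
        simp only [hlam]
        field_simp
        ring

lemma hoeffding_two_sided {Y : Type*} [Fintype Y] [DecidableEq Y]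
    (q : Y → ℝ) (hq0 : ∀ y, 0 ≤ q y) (hq1 : ∑ y, q y = 1)
    (g : Y → ℝ) (C : ℝ) (hC : 0 < C) (hg0 : ∀ y, 0 ≤ g y) (hgC : ∀ y, g y ≤ C)
    (M : ℕ) (t : ℝ) (ht : 0 ≤ t) (bad : (Fin M → Y) → Prop) [DecidablePred bad]
    (hbad : ∀ s, bad s → (M : ℝ) * t ≤ |(∑ j, g (s j)) - M * (∑ y, q y * g y)|) :
    ∑ s : Fin M → Y, (if bad s then ∏ j, q (s j) else 0) ≤
      2 * Real.exp (-(2 * M * t ^ 2 / C ^ 2)) := by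
  classical
  set μ := ∑ y, q y * g y with hμ
  have hμ' : ∑ y, q y * (C - g y) = C - μ := by
    simp only [mul_sub]
    rw [Finset.sum_sub_distrib, ← Finset.sum_mul, hq1, one_mul, hμ]
  have hsum' : ∀ s : Fin M → Y, ∑ j, (C - g (s j)) = M * C - ∑ j, g (s j) := by
    intro s
    rw [Finset.sum_sub_distrib, Finset.sum_const, Finset.card_univ, Fintype.card_fin,
      nsmul_eq_mul]
  set upper : (Fin M → Y) → Prop := fun s => (M : ℝ) * (μ + t) ≤ ∑ j, g (s j) with hup
  set lower : (Fin M → Y) → Prop :=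
    fun s => (M : ℝ) * ((∑ y, q y * (C - g y)) + t) ≤ ∑ j, (C - g (s j)) with hlo
  have step : ∀ s : Fin M → Y, (if bad s then ∏ j, q (s j) else 0) ≤
      (if upper s then ∏ j, q (s j) else 0) + (if lower s then ∏ j, q (s j) else 0) := by
    intro s
    have hP0 : 0 ≤ ∏ j, q (s j) := Finset.prod_nonneg fun j _ => hq0 (s j)
    by_cases hb : bad s
    · have habs := hbad s hb
      rcases abs_cases ((∑ j, g (s j)) - M * μ) with ⟨heq, _⟩ | ⟨heq, _⟩
      · have hu : upper s := by
          simp only [hup]; rw [mul_add]; linarith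
        rw [if_pos hb, if_pos hu]
        have : (0:ℝ) ≤ (if lower s then ∏ j, q (s j) else 0) := by positivity
        linarith
      · have hl : lower s := by
          simp only [hlo]; rw [hμ', hsum' s, mul_add]; linarith
        rw [if_pos hb, if_pos hl]
        have : (0:ℝ) ≤ (if upper s then ∏ j, q (s j) else 0) := by positivity
        linarith
    · rw [if_neg hb]; positivity
  calc ∑ s : Fin M → Y, (if bad s then ∏ j, q (s j) else 0)
      ≤ ∑ s : Fin M → Y, ((if upper s then ∏ j, q (s j) else 0) +
          (if lower s then ∏ j, q (s j) else 0)) := Finset.sum_le_sum fun s _ => step s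
  _ = (∑ s : Fin M → Y, (if upper s then ∏ j, q (s j) else 0)) +
      (∑ s : Fin M → Y, (if lower s then ∏ j, q (s j) else 0)) := Finset.sum_add_distrib
  _ ≤ Real.exp (-(2 * M * t ^ 2 / C ^ 2)) + Real.exp (-(2 * M * t ^ 2 / C ^ 2)) := by
      have h1 := chernoff_one_sided q hq0 hq1 g C hC hg0 hgC M t ht upper
        (fun s hs => hs)
      have h2 := chernoff_one_sided q hq0 hq1 (fun y => C - g y) C hC
        (fun y => by linarith [hgC y]) (fun y => by linarith [hg0 y]) M t ht lower
        (fun s hs => hs)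
      exact add_le_add (h1) (h2)
  _ = 2 * Real.exp (-(2 * M * t ^ 2 / C ^ 2)) := by ring

set_option maxHeartbeats 2000000 in
open Classical in
/-- If the importance weights are bounded by `C` and
`M ≥ (2C²N²/ε²)·ln(2(N+1)/δ)`, then with probability at least `1 − δ` the
self-normalized importance-sampled distribution is within total variation
distance `ε` of `π*`. -/
theorem mosaic_snis_tv_concentration
    {Y : Type*} [Fintype Y] [Nonempty Y] [DecidableEq Y]
    (q πstar : Y → ℝ)
    (hq_pos : ∀ y, 0 < q y) (hq_sum : ∑ y, q y = 1)
    (hπ_nonneg : ∀ y, 0 ≤ πstar y) (hπ_sum : ∑ y, πstar y = 1)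
    (w : Y → ℝ) (hw : ∀ y, w y = πstar y / q y)
    (C : ℝ) (hC : 0 < C) (hwC : ∀ y, w y ≤ C)
    (N : ℕ) (hN : N = Fintype.card Y)
    (ε δ : ℝ) (hε0 : 0 < ε) (hεN : ε ≤ (N : ℝ)) (hδ0 : 0 < δ) (hδ1 : δ < 1)
    (M : ℕ) (hM : 1 ≤ M)
    (hMbound : (2 * C ^ 2 * (N : ℝ) ^ 2 / ε ^ 2) *
      Real.log (2 * ((N : ℝ) + 1) / δ) ≤ (M : ℝ))
    (Qhat : (Fin M → Y) → Y → ℝ)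
    (hQhat : ∀ s y, Qhat s y =
      (1 / (M : ℝ)) * ∑ j, w (s j) * (if s j = y then 1 else 0))
    (Qtot : (Fin M → Y) → ℝ)
    (hQtot : ∀ s, Qtot s = (1 / (M : ℝ)) * ∑ j, w (s j)) :
    1 - δ ≤
      ∑ s : Fin M → Y,
        if (0 < Qtot s ∧
            (1 / 2) * ∑ y, |Qhat s y / Qtot s - πstar y| ≤ ε)
        then (∏ j, q (s j)) else 0 := by
  classical
  have irrel : ∀ (p : Prop) (h1 h2 : Decidable p) (a : ℝ),
      @ite ℝ p h1 a 0 = @ite ℝ p h2 a 0 := by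
    intro p h1 h2 a
    cases Subsingleton.elim h1 h2
    rfl
  have hq0 : ∀ y, 0 ≤ q y := fun y => (hq_pos y).le
  have hw0 : ∀ y, 0 ≤ w y := fun y => by
    rw [hw]; exact div_nonneg (hπ_nonneg y) (hq_pos y).le
  have hqw : ∀ y, q y * w y = πstar y := by
    intro y
    rw [hw, mul_comm, div_mul_eq_mul_div, mul_div_assoc, div_self (hq_pos y).ne', mul_one]
  have hμw : ∑ y, q y * w y = 1 := by simp only [hqw]; exact hπ_sum
  have hM0 : (0:ℝ) < (M:ℝ) := by exact_mod_cast hM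
  have hN1 : 1 ≤ N := by rw [hN]; exact Fintype.card_pos
  have hNpos : (0:ℝ) < (N:ℝ) := by exact_mod_cast hN1
  set L := Real.log (2 * ((N : ℝ) + 1) / δ) with hL
  have hL0 : 0 < L := by
    apply Real.log_pos
    rw [lt_div_iff₀ hδ0]
    nlinarith
  have hexpL : Real.exp (-L) = δ / (2 * ((N:ℝ) + 1)) := by
    rw [Real.exp_neg, hL, Real.exp_log (by positivity), inv_div]
  have hMb' : 2 * C ^ 2 * (N:ℝ) ^ 2 * L ≤ (M:ℝ) * ε ^ 2 := by
    rw [div_mul_eq_mul_div, div_le_iff₀ (by positivity)] at hMbound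
    linarith
  have hQsum : ∀ s, ∑ y, Qhat s y = Qtot s := by
    intro s
    simp only [hQhat, hQtot s, ← Finset.mul_sum]
    congr 1
    rw [Finset.sum_comm]
    apply Finset.sum_congr rfl
    intro j _
    rw [← Finset.mul_sum, Finset.sum_ite_eq]
    simp
  have hQhat0 : ∀ s y, 0 ≤ Qhat s y := by
    intro s y
    rw [hQhat]
    apply mul_nonneg (by positivity)
    apply Finset.sum_nonneg
    intro j _
    apply mul_nonneg (hw0 _)
    split_ifs <;> norm_num
  -- reduce to exhibiting a good event of probability ≥ 1 - δ
  suffices h : ∃ good : (Fin M → Y) → Prop,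
      (∀ s, good s → (0 < Qtot s ∧
        (1 / 2) * ∑ y, |Qhat s y / Qtot s - πstar y| ≤ ε)) ∧
      (∑ s : Fin M → Y, (if ¬ good s then ∏ j, q (s j) else 0)) ≤ δ by
    obtain ⟨good, himp, hbadsum⟩ := h
    have htot : ∑ s : Fin M → Y, ∏ j, q (s j) = 1 := by
      rw [sum_prod_eq_pow M q, hq_sum, one_pow]
    have hsplit : (∑ s : Fin M → Y, (if good s then ∏ j, q (s j) else 0)) +
        (∑ s : Fin M → Y, (if ¬ good s then ∏ j, q (s j) else 0)) = 1 := by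
      rw [← Finset.sum_add_distrib, ← htot]
      apply Finset.sum_congr rfl
      intro s _
      by_cases hgs : good s <;> simp [hgs]
    calc 1 - δ ≤ ∑ s : Fin M → Y, (if good s then ∏ j, q (s j) else 0) := by
          linarith
    _ ≤ _ := by
          apply Finset.sum_le_sum
          intro s _
          by_cases hgs : good s
          · rw [if_pos hgs, if_pos (himp s hgs)]
          · rw [if_neg hgs]
            split_ifs
            · exact Finset.prod_nonneg fun j _ => hq0 (s j)
            · exact le_refl 0
  rcases lt_or_ge ε 1 with hε1 | hε1
  · -- small ε : control every coordinate
    set t := ε / (2 * (N:ℝ)) with ht_def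
    have ht0 : 0 < t := by positivity
    have hgμ : ∀ y : Y, ∑ z, q z * (w z * (if z = y then 1 else 0)) = πstar y := by
      intro y
      have hz : ∀ z, q z * (w z * (if z = y then 1 else 0)) =
          (if z = y then q z * w z else 0) := by
        intro z; split_ifs <;> ring
      simp only [hz]
      rw [Finset.sum_ite_eq']
      simp [hqw y]
    refine ⟨fun s => ∀ y, |(∑ j, w (s j) * (if s j = y then 1 else 0)) -
        (M:ℝ) * πstar y| < (M:ℝ) * t, ?_, ?_⟩
    · intro s hgood
      have hQd : ∀ y, |Qhat s y - πstar y| ≤ t := by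
        intro y
        have h1 := (hgood y).le
        have h2 : Qhat s y - πstar y = (1 / (M:ℝ)) *
            ((∑ j, w (s j) * (if s j = y then 1 else 0)) - (M:ℝ) * πstar y) := by
          rw [hQhat]
          field_simp
        rw [h2, abs_mul, abs_of_pos (by positivity : (0:ℝ) < 1 / (M:ℝ))]
        calc (1 / (M:ℝ)) * |(∑ j, w (s j) * (if s j = y then 1 else 0)) - (M:ℝ) * πstar y|
            ≤ (1 / (M:ℝ)) * ((M:ℝ) * t) :=
              mul_le_mul_of_nonneg_left h1 (by positivity)
        _ = t := by field_simp
      have hD : ∑ y, |Qhat s y - πstar y| ≤ ε / 2 := by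
        calc ∑ y, |Qhat s y - πstar y| ≤ ∑ _y : Y, t :=
              Finset.sum_le_sum fun y _ => hQd y
        _ = (N:ℝ) * t := by
              rw [Finset.sum_const, Finset.card_univ, ← hN, nsmul_eq_mul]
        _ = ε / 2 := by rw [ht_def]; field_simp
      have hQc : |Qtot s - 1| ≤ ∑ y, |Qhat s y - πstar y| := by
        rw [← hQsum s, ← hπ_sum, ← Finset.sum_sub_distrib]
        exact Finset.abs_sum_le_sum_abs _ _
      have hQhalf : 1 / 2 < Qtot s := by
        have h4 := abs_le.mp (hQc.trans hD)
        linarith [h4.1]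
      have hQpos : 0 < Qtot s := by linarith
      refine ⟨hQpos, ?_⟩
      have hne : Qtot s ≠ 0 := ne_of_gt hQpos
      have heach : ∀ y, |Qhat s y / Qtot s - πstar y| =
          |Qhat s y - πstar y * Qtot s| / Qtot s := by
        intro y
        rw [div_sub' hne, abs_div, abs_of_pos hQpos]
        congr 2
        ring
      have hnum : ∑ y, |Qhat s y - πstar y * Qtot s| ≤ ε := by
        calc ∑ y, |Qhat s y - πstar y * Qtot s|
            ≤ ∑ y, (|Qhat s y - πstar y| + πstar y * |1 - Qtot s|) := by
              apply Finset.sum_le_sum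
              intro y _
              calc |Qhat s y - πstar y * Qtot s|
                  = |(Qhat s y - πstar y) + πstar y * (1 - Qtot s)| := by ring_nf
              _ ≤ |Qhat s y - πstar y| + |πstar y * (1 - Qtot s)| := abs_add_le _ _
              _ = |Qhat s y - πstar y| + πstar y * |1 - Qtot s| := by
                    rw [abs_mul, abs_of_nonneg (hπ_nonneg y)]
        _ = (∑ y, |Qhat s y - πstar y|) + |1 - Qtot s| := by
              rw [Finset.sum_add_distrib, ← Finset.sum_mul, hπ_sum, one_mul]
        _ ≤ ε / 2 + ε / 2 := by
              have h3 : |1 - Qtot s| ≤ ε / 2 := by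
                rw [abs_sub_comm]; exact hQc.trans hD
              linarith
        _ = ε := by ring
      have h5 : ∑ y, |Qhat s y / Qtot s - πstar y| ≤ 2 * ε := by
        simp only [heach]
        rw [← Finset.sum_div, div_le_iff₀ hQpos]
        nlinarith
      linarith
    · -- probability of the bad event, small ε case
      have hLle : L ≤ 2 * (M:ℝ) * t ^ 2 / C ^ 2 := by
        rw [ht_def]
        have key : 2 * (M:ℝ) * (ε / (2 * (N:ℝ))) ^ 2 / C ^ 2
            = (M:ℝ) * ε ^ 2 / (2 * (N:ℝ) ^ 2 * C ^ 2) := by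
          field_simp
        rw [key, le_div_iff₀ (by positivity)]
        nlinarith [hMb']
      have hexp_le : Real.exp (-(2 * (M:ℝ) * t ^ 2 / C ^ 2)) ≤ Real.exp (-L) :=
        Real.exp_le_exp.mpr (neg_le_neg hLle)
      have hpery : ∀ y : Y, (∑ s : Fin M → Y,
          (if (M:ℝ) * t ≤ |(∑ j, w (s j) * (if s j = y then 1 else 0)) -
            (M:ℝ) * πstar y| then ∏ j, q (s j) else 0)) ≤ 2 * Real.exp (-L) := by
        intro y
        have hb := hoeffding_two_sided q hq0 hq_sum
          (fun z => w z * (if z = y then 1 else 0)) C hC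
          (fun z => by
            apply mul_nonneg (hw0 z)
            split_ifs <;> norm_num)
          (fun z => by
            split_ifs
            · simpa using hwC z
            · simpa using hC.le)
          M t ht0.le
          (fun s => (M:ℝ) * t ≤ |(∑ j, w (s j) * (if s j = y then 1 else 0)) -
            (M:ℝ) * πstar y|)
          (fun s hs => by
            rw [hgμ y]
            exact hs)
        refine hb.trans ?_
        linarith [hexp_le]
      have hunion : ∀ s : Fin M → Y,
          (if ¬ (∀ y, |(∑ j, w (s j) * (if s j = y then 1 else 0)) -
            (M:ℝ) * πstar y| < (M:ℝ) * t) then ∏ j, q (s j) else 0)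
          ≤ ∑ y : Y, (if (M:ℝ) * t ≤ |(∑ j, w (s j) * (if s j = y then 1 else 0)) -
            (M:ℝ) * πstar y| then ∏ j, q (s j) else 0) := by
        intro s
        have hP0 : (0:ℝ) ≤ ∏ j, q (s j) := Finset.prod_nonneg fun j _ => hq0 (s j)
        by_cases hgs : ∀ y, |(∑ j, w (s j) * (if s j = y then 1 else 0)) -
            (M:ℝ) * πstar y| < (M:ℝ) * t
        · rw [if_neg (not_not_intro hgs)]
          apply Finset.sum_nonneg
          intro y _
          split_ifs
          · exact hP0
          · exact le_refl 0
        · rw [if_pos hgs]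
          push_neg at hgs
          obtain ⟨y0, hy0⟩ := hgs
          have hsingle := Finset.single_le_sum (f := fun y =>
            (if (M:ℝ) * t ≤ |(∑ j, w (s j) * (if s j = y then 1 else 0)) -
              (M:ℝ) * πstar y| then ∏ j, q (s j) else 0))
            (fun y _ => by
              split_ifs
              · exact hP0
              · exact le_refl 0) (Finset.mem_univ y0)
          rwa [if_pos hy0] at hsingle
      have key : (∑ s : Fin M → Y, (if ¬ (∀ y, |(∑ j, w (s j) * (if s j = y then 1 else 0)) -
              (M:ℝ) * πstar y| < (M:ℝ) * t) then ∏ j, q (s j) else 0)) ≤ δ := by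
       calc (∑ s : Fin M → Y, (if ¬ (∀ y, |(∑ j, w (s j) * (if s j = y then 1 else 0)) -
              (M:ℝ) * πstar y| < (M:ℝ) * t) then ∏ j, q (s j) else 0))
           ≤ ∑ s : Fin M → Y, ∑ y : Y,
             (if (M:ℝ) * t ≤ |(∑ j, w (s j) * (if s j = y then 1 else 0)) -
               (M:ℝ) * πstar y| then ∏ j, q (s j) else 0) :=
             Finset.sum_le_sum fun s _ => hunion s
       _ = ∑ y : Y, ∑ s : Fin M → Y,
             (if (M:ℝ) * t ≤ |(∑ j, w (s j) * (if s j = y then 1 else 0)) -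
               (M:ℝ) * πstar y| then ∏ j, q (s j) else 0) := Finset.sum_comm
       _ ≤ ∑ _y : Y, 2 * Real.exp (-L) := Finset.sum_le_sum fun y _ => hpery y
       _ = (N:ℝ) * (2 * Real.exp (-L)) := by
             rw [Finset.sum_const, Finset.card_univ, ← hN, nsmul_eq_mul]
       _ ≤ δ := by
             rw [hexpL]
             have heq : (N:ℝ) * (2 * (δ / (2 * ((N:ℝ) + 1)))) =
                 δ * ((N:ℝ) / ((N:ℝ) + 1)) := by
               field_simp
             rw [heq]
             have hfrac : (N:ℝ) / ((N:ℝ) + 1) ≤ 1 := by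
               rw [div_le_one (by linarith)]
               linarith
             nlinarith
      refine (le_of_eq (Finset.sum_congr rfl fun s _ => ?_)).trans key
      exact irrel _ _ _ _
  · -- large ε case : only need Qtot > 0
    refine ⟨fun s => |(∑ j, w (s j)) - (M:ℝ)| < (M:ℝ) * (1/2), ?_, ?_⟩
    · intro s hgood
      have hS : (M:ℝ) * (1/2) < ∑ j, w (s j) := by
        have h4 := abs_lt.mp hgood
        linarith [h4.1]
      have hQpos : 0 < Qtot s := by
        rw [hQtot]
        apply mul_pos (by positivity)
        linarith
      refine ⟨hQpos, ?_⟩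
      have habs : ∀ y, |Qhat s y / Qtot s - πstar y| ≤ Qhat s y / Qtot s + πstar y := by
        intro y
        have h1 : 0 ≤ Qhat s y / Qtot s := div_nonneg (hQhat0 s y) hQpos.le
        apply abs_le.mpr
        constructor
        · linarith [hπ_nonneg y]
        · linarith [hπ_nonneg y]
      calc (1/2 : ℝ) * ∑ y, |Qhat s y / Qtot s - πstar y|
          ≤ (1/2) * ∑ y, (Qhat s y / Qtot s + πstar y) :=
            mul_le_mul_of_nonneg_left (Finset.sum_le_sum fun y _ => habs y) (by norm_num)
      _ = (1/2) * ((∑ y, Qhat s y) / Qtot s + 1) := by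
            rw [Finset.sum_add_distrib, ← Finset.sum_div, hπ_sum]
      _ = 1 := by
            rw [hQsum s, div_self (ne_of_gt hQpos)]
            norm_num
      _ ≤ ε := hε1
    · have hε2 : ε ^ 2 ≤ (N:ℝ) ^ 2 := by nlinarith
      have h2 : 2 * C ^ 2 * L * (N:ℝ) ^ 2 ≤ (M:ℝ) * (N:ℝ) ^ 2 := by
        have h3 : (M:ℝ) * ε ^ 2 ≤ (M:ℝ) * (N:ℝ) ^ 2 :=
          mul_le_mul_of_nonneg_left hε2 hM0.le
        nlinarith [hMb']
      have h1 : 2 * C ^ 2 * L ≤ (M:ℝ) :=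
        le_of_mul_le_mul_right (by linarith) (by positivity : (0:ℝ) < (N:ℝ) ^ 2)
      have hLle : L ≤ 2 * (M:ℝ) * (1/2 : ℝ) ^ 2 / C ^ 2 := by
        have key : 2 * (M:ℝ) * (1/2 : ℝ) ^ 2 / C ^ 2 = (M:ℝ) / (2 * C ^ 2) := by
          field_simp
        rw [key, le_div_iff₀ (by positivity)]
        linarith
      have hexp_le : Real.exp (-(2 * (M:ℝ) * (1/2:ℝ) ^ 2 / C ^ 2)) ≤ Real.exp (-L) :=
        Real.exp_le_exp.mpr (neg_le_neg hLle)
      have hb := hoeffding_two_sided q hq0 hq_sum w C hC hw0 hwC M (1/2)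
        (by norm_num) (fun s => ¬ |(∑ j, w (s j)) - (M:ℝ)| < (M:ℝ) * (1/2))
        (fun s hs => by
          rw [hμw, mul_one]
          exact not_lt.mp hs)
      have key : (∑ s : Fin M → Y, (if ¬ |(∑ j, w (s j)) - (M:ℝ)| < (M:ℝ) * (1/2)
              then ∏ j, q (s j) else 0)) ≤ δ := by
       calc (∑ s : Fin M → Y, (if ¬ |(∑ j, w (s j)) - (M:ℝ)| < (M:ℝ) * (1/2)
               then ∏ j, q (s j) else 0))
           ≤ 2 * Real.exp (-(2 * (M:ℝ) * (1/2:ℝ) ^ 2 / C ^ 2)) := hb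
       _ ≤ 2 * Real.exp (-L) := by linarith
       _ = δ / ((N:ℝ) + 1) := by
             rw [hexpL]
             have hh : ((N:ℝ) + 1) ≠ 0 := by positivity
             field_simp
       _ ≤ δ := by
             rw [div_le_iff₀ (by linarith : (0:ℝ) < (N:ℝ) + 1)]
             nlinarith
      refine (le_of_eq (Finset.sum_congr rfl fun s _ => ?_)).trans key
      exact irrel _ _ _ _
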